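/- Let 𝒳 be a nonempty finite type, μ a probability mass function on 𝒳, η* : 𝒳 → [0,1], and α, β ∈ [0,1) with α + β < 1, and define η(x) = (1−β)·η*(x) + α·(1−η*(x)). Suppose the min anchor assumption ⨅_{x} η*(x) = 0 holds and the true base rate b* := ∑_x μ(x)·η*(x) is known with b* ≠ 0. Then the error parameters are recovered from η and b*: α = ⨅_{x} η(x) and β = 1 − α − (∑_x μ(x)·η(x) − α)/b*. -/

import Mathlib

/-- Under the min anchor assumption `⨅ η* = 0` and knowledge of the true base
rate `b* = ∑ₓ μ(x)·η*(x) ≠ 0`, the error parameters are recovered: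
`α = ⨅ η` and `β = 1 − α − (∑ₓ μ(x)·η(x) − α)/b*`. -/
theorem error_params_recovered_from_min_and_base_rate_anchors
    {𝒳 : Type*} [Fintype 𝒳] [Nonempty 𝒳]
    (μ : 𝒳 → ℝ) (hμ0 : ∀ x, 0 ≤ μ x) (hμ1 : ∑ x : 𝒳, μ x = 1)
    (ηs : 𝒳 → ℝ) (hηs : ∀ x, ηs x ∈ Set.Icc (0:ℝ) 1)
    (α β : ℝ) (hα : α ∈ Set.Ico (0:ℝ) 1) (hβ : β ∈ Set.Ico (0:ℝ) 1) (hαβ : α + β < 1)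
    (η : 𝒳 → ℝ) (hη : ∀ x, η x = (1 - β) * ηs x + α * (1 - ηs x))
    (hmin : (⨅ x, ηs x) = 0)
    (bs : ℝ) (hbs : bs = ∑ x : 𝒳, μ x * ηs x) (hbs0 : bs ≠ 0) :
    α = (⨅ x, η x) ∧ β = 1 - α - ((∑ x : 𝒳, μ x * η x) - α) / bs := by
  have h1αβ : 0 < 1 - α - β := by linarith
  obtain ⟨x0, hx0⟩ := Finite.exists_min ηs
  have hbdd : BddBelow (Set.range ηs) := Set.Finite.bddBelow (Set.finite_range ηs)
  have hx00 : ηs x0 = 0 := by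
    have h1 : ηs x0 ≤ ⨅ x, ηs x := le_ciInf hx0
    have h2 : (0:ℝ) ≤ ηs x0 := (hηs x0).1
    rw [hmin] at h1; linarith
  have key : α = ⨅ x, η x := by
    apply le_antisymm
    · apply le_ciInf
      intro x
      have h0 := (hηs x).1
      rw [hη]; nlinarith
    · have hb : BddBelow (Set.range η) := Set.Finite.bddBelow (Set.finite_range η)
      have := ciInf_le hb x0
      rw [hη, hx00] at this
      linarith
  refine ⟨key, ?_⟩
  have hsum : ∑ x : 𝒳, μ x * η x = (1 - α - β) * bs + α := by
    rw [hbs]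
    have : ∀ x, μ x * η x = (1 - α - β) * (μ x * ηs x) + α * μ x := by
      intro x; rw [hη]; ring
    rw [Finset.sum_congr rfl fun x _ => this x, Finset.sum_add_distrib,
      ← Finset.mul_sum, ← Finset.mul_sum, hμ1]
    ring
  rw [hsum]
  field_simp
  ring
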